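/- Let r ≤ 1 be an integer coprime with 3 and p > 3 a prime with p ≡ -r (mod 3) and p ≥ 3 - r. Then Σ_{j=0}^{(p-2r-3)/3} 1/(2r/3+j) + Σ_{j=1}^{(p+r-3)/3} 1/j - Σ_{j=0}^{-r} 1/(2r/3+j) ≡ 0 (mod p), as p-adic integers. -/

import Mathlib

open PadicInt Finset

private lemma padic_dvd_iff {p : ℕ} [Fact p.Prime] (z : PadicInt p) :
    (p : PadicInt p) ∣ z ↔ PadicInt.toZMod z = 0 := by
  rw [← Ideal.mem_span_singleton, ← PadicInt.maximalIdeal_eq_span_p, ← PadicInt.ker_toZMod,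
    RingHom.mem_ker]

private lemma padic_isUnit {p : ℕ} [Fact p.Prime] (z : PadicInt p)
    (h : PadicInt.toZMod z ≠ 0) : IsUnit z := by
  by_contra hz
  exact h (by
    rw [← RingHom.mem_ker, PadicInt.ker_toZMod]
    exact hz)

private lemma padic_inv {p : ℕ} [Fact p.Prime] (z : PadicInt p)
    (h : PadicInt.toZMod z ≠ 0) :
    PadicInt.toZMod (Ring.inverse z) = (PadicInt.toZMod z)⁻¹ := by
  have hu := padic_isUnit z h
  have h1 : PadicInt.toZMod (Ring.inverse z) * PadicInt.toZMod z = 1 := by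
    rw [← map_mul, Ring.inverse_mul_cancel _ hu, map_one]
  exact eq_inv_of_mul_eq_one_left h1

/-- Lemma 2.7: Under the hypotheses of Theorem 1.1, with `a = (p-2r-3)/3`,
`b = (p+r-3)/3` and `x = r/3 ∈ ℤ_p`,
`Σ_{j=0}^{(p-2r-3)/3} 1/(2r/3+j) + Σ_{j=1}^{(p+r-3)/3} 1/j - Σ_{j=0}^{-r} 1/(2r/3+j) ≡ 0 (mod p)`. -/
theorem stmt5 (p : ℕ) [Fact p.Prime] (hp3 : 3 < p)
    (r : ℤ) (hr : r ≤ 1) (hr3 : IsCoprime r 3)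
    (hpr : (p : ℤ) ≡ -r [ZMOD 3]) (hpge : 3 - r ≤ (p : ℤ))
    (a b : ℕ) (ha : (a : ℤ) * 3 = p - 2 * r - 3) (hb : (b : ℤ) * 3 = p + r - 3)
    (x : PadicInt p) (hx : 3 * x = (r : PadicInt p)) :
    (p : PadicInt p) ∣
      (∑ j ∈ Finset.range (a + 1), Ring.inverse (2 * x + (j : PadicInt p))) +
        (∑ j ∈ Finset.Icc 1 b, Ring.inverse ((j : PadicInt p))) -
        ∑ j ∈ Finset.range ((1 - r).toNat), Ring.inverse (2 * x + (j : PadicInt p)) := by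
  have hr3' : ¬ (3 : ℤ) ∣ r := by
    intro h
    have := hr3.isUnit_of_dvd' h dvd_rfl
    rw [Int.isUnit_iff] at this
    omega
  have hpr' : (3 : ℤ) ∣ (p : ℤ) + r := by
    have := hpr.dvd
    omega
  set y : ZMod p := PadicInt.toZMod x with hy
  have h3ne : (3 : ZMod p) ≠ 0 := by
    have : ((3 : ℕ) : ZMod p) ≠ 0 := by
      rw [Ne, ZMod.natCast_eq_zero_iff]
      intro h
      have := Nat.le_of_dvd (by norm_num) h
      omega
    simpa using this
  have h3y : 3 * y = ((r : ℤ) : ZMod p) := by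
    have := congrArg PadicInt.toZMod hx
    rw [map_mul, map_intCast, map_ofNat] at this
    rw [hy, ← this]
  -- key nonvanishing fact
  have key : ∀ j : ℕ, 2 * r + 3 * (j : ℤ) ≤ (p : ℤ) - 3 → (2 * y + (j : ZMod p)) ≠ 0 := by
    intro j hj h0
    have h3 : (3 : ZMod p) * (2 * y + (j : ZMod p)) = ((2 * r + 3 * (j : ℤ) : ℤ) : ZMod p) := by
      push_cast
      linear_combination 2 * h3y
    rw [h0, mul_zero] at h3
    have hdvd : ((p : ℤ)) ∣ 2 * r + 3 * (j : ℤ) := by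
      rwa [eq_comm, ZMod.intCast_zmod_eq_zero_iff_dvd] at h3
    obtain ⟨k, hk⟩ := hdvd
    have hp0 : (0 : ℤ) < p := by exact_mod_cast Nat.zero_lt_of_lt hp3
    have hjnn : (0 : ℤ) ≤ j := Int.ofNat_nonneg j
    -- bounds: -2p < 2r + 3j ≤ p - 3 < p
    have hlow : -(2 * (p : ℤ)) < 2 * r + 3 * (j : ℤ) := by omega
    have hk1 : k ≤ 0 := by nlinarith
    have hk2 : -1 ≤ k := by nlinarith
    interval_cases k
    · -- 2r + 3j = -p : then 3 ∣ 2r + p hence 3 ∣ r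
      have : (3 : ℤ) ∣ r := by omega
      exact hr3' this
    · have : (3 : ℤ) ∣ r := by omega
      exact hr3' this
  rw [padic_dvd_iff, map_sub, map_add, map_sum, map_sum, map_sum]
  set n : ℕ := (1 - r).toNat with hn
  have hnr : (n : ℤ) = 1 - r := Int.toNat_of_nonneg (by omega)
  -- rewrite the three sums through toZMod
  have hsum1 : ∑ j ∈ Finset.range (a + 1), PadicInt.toZMod (Ring.inverse (2 * x + (j : PadicInt p)))
      = ∑ j ∈ Finset.range (a + 1), (2 * y + (j : ZMod p))⁻¹ := by
    refine Finset.sum_congr rfl fun j hj => ?_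
    rw [Finset.mem_range] at hj
    have hne : (2 * y + (j : ZMod p)) ≠ 0 := key j (by omega)
    have hmap : PadicInt.toZMod (2 * x + (j : PadicInt p)) = 2 * y + (j : ZMod p) := by
      rw [map_add, map_mul, map_natCast, map_ofNat]
    rw [padic_inv _ (by rw [hmap]; exact hne), hmap]
  have hsum3 : ∑ j ∈ Finset.range n, PadicInt.toZMod (Ring.inverse (2 * x + (j : PadicInt p)))
      = ∑ j ∈ Finset.range n, (2 * y + (j : ZMod p))⁻¹ := by
    refine Finset.sum_congr rfl fun j hj => ?_
    rw [Finset.mem_range] at hj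
    have hjr : (j : ℤ) < 1 - r := by omega
    have hne : (2 * y + (j : ZMod p)) ≠ 0 := key j (by omega)
    have hmap : PadicInt.toZMod (2 * x + (j : PadicInt p)) = 2 * y + (j : ZMod p) := by
      rw [map_add, map_mul, map_natCast, map_ofNat]
    rw [padic_inv _ (by rw [hmap]; exact hne), hmap]
  have hbp : b < p := by omega
  have hsum2 : ∑ j ∈ Finset.Icc 1 b, PadicInt.toZMod (Ring.inverse ((j : PadicInt p)))
      = ∑ j ∈ Finset.Icc 1 b, ((j : ZMod p))⁻¹ := by
    refine Finset.sum_congr rfl fun j hj => ?_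
    rw [Finset.mem_Icc] at hj
    have hne : ((j : ZMod p)) ≠ 0 := by
      rw [Ne, ZMod.natCast_eq_zero_iff]
      intro h
      have := Nat.le_of_dvd (by omega) h
      omega
    rw [padic_inv _ (by rw [map_natCast]; exact hne), map_natCast]
  rw [hsum1, hsum2, hsum3]
  -- split the first sum
  have hna : n ≤ a + 1 := by omega
  rw [Finset.range_eq_Ico, ← Finset.sum_Ico_consecutive _ (Nat.zero_le n) hna,
    ← Finset.range_eq_Ico]
  -- reindexed sum equals minus the middle sum
  have hre : ∑ j ∈ Finset.Ico n (a + 1), (2 * y + (j : ZMod p))⁻¹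
      = ∑ m ∈ Finset.Icc 1 b, -((m : ZMod p))⁻¹ := by
    refine Finset.sum_nbij' (fun j => a + 1 - j) (fun m => a + 1 - m) ?_ ?_ ?_ ?_ ?_
    · intro j hj
      rw [Finset.mem_Ico] at hj
      rw [Finset.mem_Icc]
      omega
    · intro m hm
      rw [Finset.mem_Icc] at hm
      rw [Finset.mem_Ico]
      omega
    · intro j hj
      rw [Finset.mem_Ico] at hj
      omega
    · intro m hm
      rw [Finset.mem_Icc] at hm
      omega
    · intro j hj
      rw [Finset.mem_Ico] at hj
      have hval : 2 * y + (j : ZMod p) = -(((a + 1 - j : ℕ) : ZMod p)) := by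
        have hc : (((a + 1 - j : ℕ) : ℤ)) = (a : ℤ) + 1 - j := by
          rw [Nat.cast_sub (by omega)]
          push_cast
          ring
        apply mul_left_cancel₀ h3ne
        have hL : (3 : ZMod p) * (2 * y + (j : ZMod p))
            = ((2 * r + 3 * (j : ℤ) : ℤ) : ZMod p) := by
          push_cast
          linear_combination 2 * h3y
        rw [hL]
        have hpz : (((p : ℤ)) : ZMod p) = 0 := by
          rw [ZMod.intCast_zmod_eq_zero_iff_dvd]
        have : (((a + 1 - j : ℕ) : ZMod p)) = (((a : ℤ) + 1 - j : ℤ) : ZMod p) := by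
          rw [← hc]; push_cast; ring
        rw [this]
        have harith : (2 * r + 3 * (j : ℤ) : ℤ) = -(3 * ((a : ℤ) + 1 - j)) + (p : ℤ) := by omega
        rw [harith]
        push_cast
        rw [ZMod.natCast_self]
        ring
      rw [hval, inv_neg]
  rw [hre]
  rw [Finset.sum_neg_distrib]
  ring
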